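/- Let H be a real Hilbert space, I a closed cofinite subspace, F = I^⊥ finite-dimensional, and let Λ_I denote the set of Lagrangian subspaces L of S(H) = H × H with clean intersection with I₀ = I × {0} (i.e., L ∩ I₀ = {0}, L + I₀ closed). For a Lagrangian subspace L of F × F, define ε^I(L) := L + J I₀, where J(u,v) = (-v,u). Then ε^I(L) belongs to Λ_I, and the symplectic reduction of ε^I(L) modulo I₀ equals L (i.e., ρ^I ∘ ε^I = id on the Lagrangian Grassmannian of F × F). -/

import Mathlib

open RealInnerProductSpace

set_option synthInstance.maxHeartbeats 1000000
set_option maxHeartbeats 1000000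

/-- Let `I` be a closed cofinite subspace of `H`, `F = I^⊥`, `I₀ = I × {0}`.  For
a Lagrangian subspace `L` of `F × F`, the subspace `ε^I(L) := L + J I₀ = L + ({0} × I)`
is a Lagrangian subspace of `S(H)` having clean intersection with `I₀`, and its
symplectic reduction modulo `I₀`, namely `(ε^I(L) + I₀) ∩ (F × F)`, equals `L`. -/
theorem statement19 {H : Type*} [NormedAddCommGroup H] [InnerProductSpace ℝ H] [CompleteSpace H]
    (I : Submodule ℝ H) (hIc : IsClosed (I : Set H))
    (hcof : FiniteDimensional ℝ ↥Iᗮ)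
    (L : Submodule ℝ (H × H)) (hLF : L ≤ Iᗮ.prod Iᗮ)
    (hLag : (L : Set (H × H)) =
      {q | q ∈ Iᗮ.prod Iᗮ ∧ ∀ p ∈ L, (⟪q.2, p.1⟫ - ⟪q.1, p.2⟫ : ℝ) = 0}) :
    let I₀ : Submodule ℝ (H × H) := I.prod ⊥
    let εL : Submodule ℝ (H × H) := L ⊔ (⊥ : Submodule ℝ H).prod I
    εL ⊓ I₀ = ⊥ ∧
    IsClosed ((εL ⊔ I₀ : Submodule ℝ (H × H)) : Set (H × H)) ∧
    IsClosed (εL : Set (H × H)) ∧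
    (εL : Set (H × H)) = {q | ∀ p ∈ εL, (⟪q.2, p.1⟫ - ⟪q.1, p.2⟫ : ℝ) = 0} ∧
    (εL ⊔ I₀) ⊓ Iᗮ.prod Iᗮ = L := by
  intro I₀ εL
  haveI : CompleteSpace I := hIc.completeSpace_coe
  have hoo : Iᗮᗮ = I := Submodule.orthogonal_orthogonal I
  haveI : FiniteDimensional ℝ ↥(Iᗮ.prod Iᗮ) := by
    rw [LinearMap.prod_eq_sup_map]
    infer_instance
  haveI : FiniteDimensional ℝ ↥L := Submodule.finiteDimensional_of_le hLF
  -- the orthogonal projection onto Iᗮ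
  set Q : H → H := fun v => (Submodule.orthogonalProjection Iᗮ v : H) with hQdef
  have hQmem : ∀ v, Q v ∈ Iᗮ := fun v => (Submodule.orthogonalProjection Iᗮ v).2
  have hQsub : ∀ v, v - Q v ∈ I := fun v => by
    have := Submodule.sub_starProjection_mem_orthogonal (K := Iᗮ) v
    rwa [hoo] at this
  have hQself : ∀ v ∈ Iᗮ, Q v = v := fun v hv => Submodule.starProjection_eq_self_iff.mpr hv
  have hQadd : ∀ a b, Q (a + b) = Q a + Q b := fun a b => by
    simp only [hQdef, map_add, Submodule.coe_add]
  have hzero : ∀ x : H, x ∈ I → x ∈ Iᗮ → x = 0 := fun x h1 h2 => by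
    have := (Submodule.mem_orthogonal I x).mp h2 x h1
    exact inner_self_eq_zero.mp this
  have hQI : ∀ v ∈ I, Q v = 0 := fun v hv => by
    have h1 : Q v ∈ I := by
      have : Q v = v - (v - Q v) := by abel
      rw [this]; exact Submodule.sub_mem I hv (hQsub v)
    exact hzero _ h1 (hQmem v)
  -- inner products between I and Iᗮ vanish
  have hIF : ∀ u ∈ I, ∀ v ∈ Iᗮ, (⟪u, v⟫ : ℝ) = 0 := fun u hu v hv =>
    (Submodule.mem_orthogonal I v).mp hv u hu
  have hFI : ∀ u ∈ Iᗮ, ∀ v ∈ I, (⟪u, v⟫ : ℝ) = 0 := fun u hu v hv => by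
    rw [real_inner_comm]; exact hIF v hv u hu
  -- membership characterization of εL
  have hmemε : ∀ x : H × H, x ∈ εL ↔ x.1 ∈ Iᗮ ∧ (Q x.1, Q x.2) ∈ L := by
    intro x
    constructor
    · intro hx
      obtain ⟨l, hl, z, hz, rfl⟩ := Submodule.mem_sup.mp hx
      obtain ⟨hz1, hz2⟩ := Submodule.mem_prod.mp hz
      rw [Submodule.mem_bot] at hz1
      have hl1 : l.1 ∈ Iᗮ := (Submodule.mem_prod.mp (hLF hl)).1
      have hl2 : l.2 ∈ Iᗮ := (Submodule.mem_prod.mp (hLF hl)).2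
      constructor
      · simpa [hz1] using hl1
      · have e1 : Q (l + z).1 = l.1 := by
          simp only [Prod.fst_add, hz1, add_zero]; exact hQself _ hl1
        have e2 : Q (l + z).2 = l.2 := by
          simp only [Prod.snd_add, hQadd, hQself _ hl2, hQI _ hz2, add_zero]
        rw [e1, e2]
        exact hl
    · rintro ⟨h1, h2⟩
      have hx1 : Q x.1 = x.1 := hQself _ h1
      have hdecomp : x = (Q x.1, Q x.2) + (0, x.2 - Q x.2) := by
        ext <;> simp [hx1]
      rw [hdecomp]
      exact Submodule.add_mem _ (Submodule.mem_sup_left h2)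
        (Submodule.mem_sup_right (Submodule.mem_prod.mpr
          ⟨Submodule.mem_bot ℝ |>.mpr rfl, hQsub x.2⟩))
  -- membership characterization of εL ⊔ I₀
  have hmemsup : ∀ x : H × H, x ∈ εL ⊔ I₀ ↔ (Q x.1, Q x.2) ∈ L := by
    intro x
    constructor
    · intro hx
      obtain ⟨y, hy, z, hz, rfl⟩ := Submodule.mem_sup.mp hx
      obtain ⟨hz1, hz2⟩ := Submodule.mem_prod.mp hz
      rw [Submodule.mem_bot] at hz2
      obtain ⟨hy1, hyL⟩ := (hmemε y).mp hy
      have e1 : Q (y + z).1 = Q y.1 := by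
        simp only [Prod.fst_add, hQadd, hQI _ hz1, add_zero]
      have e2 : Q (y + z).2 = Q y.2 := by
        simp only [Prod.snd_add, hz2, add_zero]
      rw [e1, e2]
      exact hyL
    · intro h2
      have hdecomp : x = ((Q x.1, Q x.2) + (0, x.2 - Q x.2)) + (x.1 - Q x.1, 0) := by
        ext <;> simp
      rw [hdecomp]
      refine Submodule.add_mem _ (Submodule.mem_sup_left ?_) (Submodule.mem_sup_right ?_)
      · exact Submodule.add_mem _ (Submodule.mem_sup_left h2)
          (Submodule.mem_sup_right (Submodule.mem_prod.mpr
            ⟨Submodule.mem_bot ℝ |>.mpr rfl, hQsub x.2⟩))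
      · exact Submodule.mem_prod.mpr ⟨hQsub x.1, Submodule.mem_bot ℝ |>.mpr rfl⟩
  have hLclosed : IsClosed (L : Set (H × H)) := Submodule.closed_of_finiteDimensional L
  have hQcont : Continuous Q := continuous_subtype_val.comp (Submodule.orthogonalProjection Iᗮ).continuous
  have hQQcont : Continuous (fun x : H × H => (Q x.1, Q x.2)) :=
    Continuous.prodMk (hQcont.comp continuous_fst) (hQcont.comp continuous_snd)
  refine ⟨?_, ?_, ?_, ?_, ?_⟩
  · -- εL ⊓ I₀ = ⊥
    rw [Submodule.eq_bot_iff]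
    rintro x ⟨hx1, hx2⟩
    obtain ⟨hxI, hx0⟩ := Submodule.mem_prod.mp hx2
    rw [Submodule.mem_bot] at hx0
    obtain ⟨hxF, -⟩ := (hmemε x).mp hx1
    have : x.1 = 0 := hzero _ hxI hxF
    exact Prod.ext this hx0
  · -- closedness of εL ⊔ I₀
    have : ((εL ⊔ I₀ : Submodule ℝ (H × H)) : Set (H × H)) =
        (fun x : H × H => (Q x.1, Q x.2)) ⁻¹' (L : Set (H × H)) := by
      ext x; exact hmemsup x
    rw [this]
    exact hLclosed.preimage hQQcont
  · -- closedness of εL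
    have : (εL : Set (H × H)) =
        (Prod.fst ⁻¹' (Iᗮ : Set H)) ∩
          ((fun x : H × H => (Q x.1, Q x.2)) ⁻¹' (L : Set (H × H))) := by
      ext x; exact hmemε x
    rw [this]
    exact ((Submodule.closed_of_finiteDimensional Iᗮ).preimage continuous_fst).inter
      (hLclosed.preimage hQQcont)
  · -- εL is Lagrangian in S(H)
    ext q
    simp only [Set.mem_setOf_eq, SetLike.mem_coe]
    constructor
    · intro hq p hp
      obtain ⟨l, hl, z, hz, rfl⟩ := Submodule.mem_sup.mp hq
      obtain ⟨hz1, hz2⟩ := Submodule.mem_prod.mp hz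
      rw [Submodule.mem_bot] at hz1
      obtain ⟨l', hl', z', hz', rfl⟩ := Submodule.mem_sup.mp hp
      obtain ⟨hz'1, hz'2⟩ := Submodule.mem_prod.mp hz'
      rw [Submodule.mem_bot] at hz'1
      have hl1 : l.1 ∈ Iᗮ := (Submodule.mem_prod.mp (hLF hl)).1
      have hl'1 : l'.1 ∈ Iᗮ := (Submodule.mem_prod.mp (hLF hl')).1
      have hl'2 : l'.2 ∈ Iᗮ := (Submodule.mem_prod.mp (hLF hl')).2
      have hLL : (⟪l.2, l'.1⟫ - ⟪l.1, l'.2⟫ : ℝ) = 0 := by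
        have hmem : l ∈ (L : Set (H × H)) := hl
        rw [hLag] at hmem
        exact hmem.2 l' hl'
      simp only [Prod.fst_add, Prod.snd_add, hz1, hz'1, add_zero, inner_add_left,
        inner_add_right]
      rw [hIF _ hz2 _ hl'1, hFI _ hl1 _ hz'2]
      linarith
    · intro hq
      have hq1 : q.1 ∈ Iᗮ := by
        rw [Submodule.mem_orthogonal]
        intro u hu
        have hmem : ((0 : H), u) ∈ εL := Submodule.mem_sup_right
          (Submodule.mem_prod.mpr ⟨Submodule.mem_bot ℝ |>.mpr rfl, hu⟩)
        have := hq _ hmem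
        simp only [inner_zero_right] at this
        rw [real_inner_comm]
        linarith
      have hq' : (q.1, Q q.2) ∈ L := by
        rw [← SetLike.mem_coe, hLag]
        refine ⟨Submodule.mem_prod.mpr ⟨hq1, hQmem _⟩, fun p hp => ?_⟩
        have hp1 : p.1 ∈ Iᗮ := (Submodule.mem_prod.mp (hLF hp)).1
        have hωqp := hq p (Submodule.mem_sup_left hp)
        have hsplit : (⟪q.2, p.1⟫ : ℝ) = ⟪Q q.2, p.1⟫ + ⟪q.2 - Q q.2, p.1⟫ := by
          rw [← inner_add_left]
          congr 1
          abel
        have hz : (⟪q.2 - Q q.2, p.1⟫ : ℝ) = 0 := hIF _ (hQsub q.2) _ hp1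
        simp only
        rw [hsplit, hz] at hωqp
        linarith
      have hdecomp : q = (q.1, Q q.2) + (0, q.2 - Q q.2) := by
        ext <;> simp
      rw [hdecomp]
      exact Submodule.add_mem _ (Submodule.mem_sup_left hq')
        (Submodule.mem_sup_right (Submodule.mem_prod.mpr
          ⟨Submodule.mem_bot ℝ |>.mpr rfl, hQsub q.2⟩))
  · -- reduction gives back L
    ext x
    simp only [Submodule.mem_inf, hmemsup, Submodule.mem_prod]
    constructor
    · rintro ⟨hL, hx1, hx2⟩
      rwa [hQself _ hx1, hQself _ hx2, Prod.mk.eta] at hL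
    · intro hx
      have h1 : x.1 ∈ Iᗮ := (Submodule.mem_prod.mp (hLF hx)).1
      have h2 : x.2 ∈ Iᗮ := (Submodule.mem_prod.mp (hLF hx)).2
      refine ⟨?_, h1, h2⟩
      rwa [hQself _ h1, hQself _ h2, Prod.mk.eta]
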